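/- Let E be a Hilbert C*-module over a C*-algebra A and let S : E → E be a bounded linear operator such that S∘K ∈ K(E) for every K ∈ K(E) (S is a left multiplier of K(E) inside B(E)). Then S is an A-module map: S(ξa) = S(ξ)a for all ξ ∈ E, a ∈ A. Hence LM_E(K(E)) = End_A(E). -/

import Mathlib

open scoped InnerProductSpace RightActions
open Filter Topology

/-- The Hilbert C⋆-module class as it stood in Mathlib (December 2024): a right `A`-module
(action of `Aᵐᵒᵖ`) with `⟪x, y <• a⟫ = ⟪x, y⟫ * a`. -/
class CStarModuleRight (A E : Type*) [NonUnitalSemiring A] [StarRing A]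
    [Module ℂ A] [AddCommGroup E] [Module ℂ E] [PartialOrder A] [SMul Aᵐᵒᵖ E] [Norm A] [Norm E]
    extends Inner A E where
  inner_add_right {x} {y} {z} : inner x (y + z) = inner x y + inner x z
  inner_self_nonneg {x} : 0 ≤ inner x x
  inner_self {x} : inner x x = 0 ↔ x = 0
  inner_op_smul_right {a : A} {x y : E} : inner x (y <• a) = inner x y * a
  inner_smul_right_complex {z : ℂ} {x} {y} : inner x (z • y) = z • inner x y
  star_inner x y : star (inner x y) = inner y x
  norm_eq_sqrt_norm_inner_self x : ‖x‖ = √‖inner x x‖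

section Defs

variable (A : Type*) (E : Type*) [NonUnitalCStarAlgebra A] [PartialOrder A] [StarOrderedRing A]
  [NormedAddCommGroup E] [NormedSpace ℂ E] [SMul Aᵐᵒᵖ E] [CStarModuleRight A E]

/-- An operator on a Hilbert C*-module is *adjointable* if it admits an adjoint with respect to
the `A`-valued inner product. -/
def Adjointable (T : E →L[ℂ] E) : Prop :=
  ∃ S : E →L[ℂ] E, ∀ x y : E, ⟪T x, y⟫_A = ⟪x, S y⟫_A

/-- `EJ A E J` is the closed linear span `E(J)` of `{ξ • a : ξ ∈ E, a ∈ J}`. -/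
noncomputable def EJ (J : Set A) : Submodule ℂ E :=
  (Submodule.span ℂ {y : E | ∃ ξ : E, ∃ a ∈ J, y = ξ <• a}).topologicalClosure

/-- `JM A E M` is the closed linear span `J(M)` of `{⟪η, m⟫ : η ∈ E, m ∈ M}`. -/
noncomputable def JM (M : Set E) : Submodule ℂ A :=
  (Submodule.span ℂ {a : A | ∃ η : E, ∃ m ∈ M, a = ⟪η, m⟫_A}).topologicalClosure

/-- `BS A E` is the C*-algebra `B`, the closure of the linear span of all inner products. -/
noncomputable def BS : Set A :=
  closure (Submodule.span ℂ {a : A | ∃ η ξ : E, a = ⟪η, ξ⟫_A} : Set A)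

/-- `KE A E` is `K(E)`, the closed (non-unital) algebra generated by the rank-one operators
`θ_{η,ξ} : x ↦ η • ⟪ξ, x⟫`. -/
noncomputable def KE : NonUnitalSubalgebra ℂ (E →L[ℂ] E) :=
  (NonUnitalAlgebra.adjoin ℂ
    {T : E →L[ℂ] E | ∃ η ξ : E, ∀ x : E, T x = η <• ⟪ξ, x⟫_A}).topologicalClosure

end Defs

variable {A E : Type*} [NonUnitalCStarAlgebra A] [PartialOrder A] [StarOrderedRing A]
  [NormedAddCommGroup E] [NormedSpace ℂ E] [SMul Aᵐᵒᵖ E] [CStarModuleRight A E]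

set_option linter.unusedSectionVars false

namespace CStarModuleRight

lemma inner_add_left {x y z : E} : ⟪x + y, z⟫_A = ⟪x, z⟫_A + ⟪y, z⟫_A := by
  rw [← star_star (r := ⟪x + y, z⟫_A)]
  simp only [inner_add_right, star_add, star_inner]

lemma inner_op_smul_left {a : A} {x y : E} : ⟪x <• a, y⟫_A = star a * ⟪x, y⟫_A := by
  rw [← star_inner y, inner_op_smul_right, star_mul, star_inner]

lemma inner_smul_left_complex {z : ℂ} {x y : E} : ⟪z • x, y⟫_A = star z • ⟪x, y⟫_A := by
  rw [← star_inner y, inner_smul_right_complex, star_smul, star_inner]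

lemma inner_smul_left_real {z : ℝ} {x y : E} : ⟪z • x, y⟫_A = z • ⟪x, y⟫_A := by
  have h₁ : z • x = (z : ℂ) • x := by simp
  rw [h₁, inner_smul_left_complex]
  simp

lemma inner_smul_right_real {z : ℝ} {x y : E} : ⟪x, z • y⟫_A = z • ⟪x, y⟫_A := by
  have h₁ : z • y = (z : ℂ) • y := by simp
  rw [h₁, inner_smul_right_complex]
  simp

noncomputable def innerₛₗ : E →ₗ⋆[ℂ] E →ₗ[ℂ] A where
  toFun x := { toFun := fun y => ⟪x, y⟫_A
               map_add' := fun z y => inner_add_right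
               map_smul' := fun z y => inner_smul_right_complex }
  map_add' z y := by ext; exact inner_add_left
  map_smul' z y := by ext; exact inner_smul_left_complex

lemma inner_sub_right {x y z : E} : ⟪x, y - z⟫_A = ⟪x, y⟫_A - ⟪x, z⟫_A :=
  map_sub (innerₛₗ (A := A) x) y z

lemma inner_sub_left {x y z : E} : ⟪x - y, z⟫_A = ⟪x, z⟫_A - ⟪y, z⟫_A := by
  rw [← star_inner z, inner_sub_right, star_sub, star_inner, star_inner]

@[simp] lemma inner_zero_right {x : E} : ⟪x, 0⟫_A = 0 := map_zero (innerₛₗ (A := A) x)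

@[simp] lemma inner_zero_left {x : E} : ⟪0, x⟫_A = 0 := by
  rw [← star_inner x, inner_zero_right, star_zero]

lemma norm_sq_eq {x : E} : ‖x‖ ^ 2 = ‖⟪x, x⟫_A‖ := by
  rw [norm_eq_sqrt_norm_inner_self (A := A), Real.sq_sqrt (norm_nonneg _)]

lemma inner_mul_inner_swap_le' {x y : E} : ⟪y, x⟫_A * ⟪x, y⟫_A ≤ ‖x‖ ^ 2 • ⟪y, y⟫_A := by
  rcases eq_or_ne x 0 with h | h
  · subst h
    simp
  · have h₁ : ∀ (a : A),
        (0 : A) ≤ ‖x‖ ^ 2 • (star a * a) - ‖x‖ ^ 2 • (star a * ⟪x, y⟫_A)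
                  - ‖x‖ ^ 2 • (⟪y, x⟫_A * a) + ‖x‖ ^ 2 • (‖x‖ ^ 2 • ⟪y, y⟫_A) := fun a => by
      calc (0 : A) ≤ ⟪x <• a - ‖x‖ ^ 2 • y, x <• a - ‖x‖ ^ 2 • y⟫_A := by exact inner_self_nonneg
            _ = star a * ⟪x, x⟫_A * a - ‖x‖ ^ 2 • (star a * ⟪x, y⟫_A)
                  - ‖x‖ ^ 2 • (⟪y, x⟫_A * a) + ‖x‖ ^ 2 • (‖x‖ ^ 2 • ⟪y, y⟫_A) := by
                      simp only [inner_sub_right, inner_op_smul_right, inner_sub_left,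
                        inner_op_smul_left, inner_smul_left_real, mul_sub, mul_smul_comm,
                        inner_smul_right_real, smul_sub, sub_mul, mul_assoc, smul_mul_assoc]
                      abel
            _ ≤ ‖x‖ ^ 2 • (star a * a) - ‖x‖ ^ 2 • (star a * ⟪x, y⟫_A)
                  - ‖x‖ ^ 2 • (⟪y, x⟫_A * a) + ‖x‖ ^ 2 • (‖x‖ ^ 2 • ⟪y, y⟫_A) := by
                      gcongr
                      calc _ ≤ ‖⟪x, x⟫_A‖ • (star a * a) :=
                          CStarAlgebra.star_left_conjugate_le_norm_smul (star_inner x x)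
                        _ = (√‖⟪x, x⟫_A‖) ^ 2 • (star a * a) := by
                          rw [Real.sq_sqrt]
                          positivity
                        _ = ‖x‖ ^ 2 • (star a * a) := by rw [← norm_eq_sqrt_norm_inner_self]
    specialize h₁ ⟪x, y⟫_A
    simp only [star_inner, sub_self, zero_sub, le_neg_add_iff_add_le, add_zero] at h₁
    rwa [smul_le_smul_iff_of_pos_left (pow_pos (norm_pos_iff.mpr h) _)] at h₁

lemma norm_inner_le' {x y : E} : ‖⟪y, x⟫_A‖ ≤ ‖x‖ * ‖y‖ := by
  have := calc ‖⟪y, x⟫_A‖ ^ 2 = ‖⟪y, x⟫_A * ⟪x, y⟫_A‖ := by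
                rw [← star_inner y x, CStarRing.norm_self_mul_star, pow_two]
    _ ≤ ‖‖x‖ ^ 2 • ⟪y, y⟫_A‖ := by
                refine CStarAlgebra.norm_le_norm_of_nonneg_of_le ?_ inner_mul_inner_swap_le'
                rw [← star_inner y x]
                exact mul_star_self_nonneg ⟪y, x⟫_A
    _ = ‖x‖ ^ 2 * ‖⟪y, y⟫_A‖ := by simp [norm_smul]
    _ = ‖x‖ ^ 2 * ‖y‖ ^ 2 := by rw [norm_sq_eq (A := A) (x := y)]
    _ = (‖x‖ * ‖y‖) ^ 2 := by rw [mul_pow]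
  exact (pow_le_pow_iff_left₀ (norm_nonneg _) (by positivity) (by norm_num : (2:ℕ) ≠ 0)).mp this

noncomputable def innerSL : E →L⋆[ℂ] E →L[ℂ] A :=
  LinearMap.mkContinuous₂ (innerₛₗ : E →ₗ⋆[ℂ] E →ₗ[ℂ] A) 1 <| fun x y => by
    rw [one_mul, mul_comm]; exact norm_inner_le'

end CStarModuleRight

namespace LMaux

open CStarModuleRight

lemma ext_inner_left' {x y : E} (h : ∀ z : E, ⟪z, x⟫_A = ⟪z, y⟫_A) : x = y := by
  rw [← sub_eq_zero, ← CStarModuleRight.inner_self (A := A), CStarModuleRight.inner_sub_right,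
    h (x - y), sub_eq_zero]

lemma op_smul_add' (a : A) (x y : E) : (x + y) <• a = x <• a + y <• a := by
  refine ext_inner_left' (A := A) fun z => ?_
  rw [CStarModuleRight.inner_op_smul_right, CStarModuleRight.inner_add_right,
    CStarModuleRight.inner_add_right, CStarModuleRight.inner_op_smul_right,
    CStarModuleRight.inner_op_smul_right, add_mul]

lemma op_smul_smul' (a b : A) (x : E) : (x <• b) <• a = x <• (b * a) := by
  refine ext_inner_left' (A := A) fun z => ?_
  rw [CStarModuleRight.inner_op_smul_right, CStarModuleRight.inner_op_smul_right,
    CStarModuleRight.inner_op_smul_right, mul_assoc]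

lemma op_smul_csmul' (a : A) (z : ℂ) (x : E) : (z • x) <• a = z • (x <• a) := by
  refine ext_inner_left' (A := A) fun w => ?_
  rw [CStarModuleRight.inner_op_smul_right, CStarModuleRight.inner_smul_right_complex,
    CStarModuleRight.inner_smul_right_complex, CStarModuleRight.inner_op_smul_right, smul_mul_assoc]

lemma op_smul_add_A' (x : E) (a b : A) : x <• (a + b) = x <• a + x <• b := by
  refine ext_inner_left' (A := A) fun z => ?_
  rw [CStarModuleRight.inner_op_smul_right, CStarModuleRight.inner_add_right,
    CStarModuleRight.inner_op_smul_right, CStarModuleRight.inner_op_smul_right, mul_add]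

lemma op_smul_csmul_A' (x : E) (z : ℂ) (a : A) : x <• (z • a) = z • (x <• a) := by
  refine ext_inner_left' (A := A) fun w => ?_
  rw [CStarModuleRight.inner_op_smul_right, CStarModuleRight.inner_smul_right_complex,
    CStarModuleRight.inner_op_smul_right, mul_smul_comm]

lemma norm_op_smul_le' (x : E) (a : A) : ‖x <• a‖ ≤ ‖x‖ * ‖a‖ := by
  have h1 : ‖x <• a‖ ^ 2 = ‖star a * ⟪x, x⟫_A * a‖ := by
    rw [norm_sq_eq (A := A), CStarModuleRight.inner_op_smul_right, CStarModuleRight.inner_op_smul_left, mul_assoc]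
  have h2 : ‖star a * ⟪x, x⟫_A * a‖ ≤ ‖a‖ * (‖x‖^2) * ‖a‖ := by
    calc ‖star a * ⟪x, x⟫_A * a‖ ≤ ‖star a * ⟪x, x⟫_A‖ * ‖a‖ := norm_mul_le _ _
    _ ≤ ‖star a‖ * ‖⟪x, x⟫_A‖ * ‖a‖ := by gcongr; exact norm_mul_le _ _
    _ = ‖a‖ * (‖x‖^2) * ‖a‖ := by rw [norm_star, norm_sq_eq (A := A)]
  nlinarith [norm_nonneg (x <• a), mul_nonneg (norm_nonneg x) (norm_nonneg a)]

lemma op_smul_zero' (a : A) : (0 : E) <• a = 0 := by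
  refine ext_inner_left' (A := A) fun z => ?_
  rw [CStarModuleRight.inner_op_smul_right]
  simp

/-- right multiplication by `a` as a CLM on `E` -/
noncomputable def rmulCLM (a : A) : E →L[ℂ] E :=
  LinearMap.mkContinuous
    { toFun := fun x => x <• a
      map_add' := fun x y => op_smul_add' a x y
      map_smul' := fun z x => op_smul_csmul' a z x } ‖a‖
    (fun x => by rw [mul_comm]; exact norm_op_smul_le' x a)

@[simp] lemma rmulCLM_apply (a : A) (x : E) : rmulCLM (E := E) a x = x <• a := rfl

/-- `a ↦ x <• a` as a CLM `A → E` -/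
noncomputable def smulCLM (x : E) : A →L[ℂ] E :=
  LinearMap.mkContinuous
    { toFun := fun a => x <• a
      map_add' := fun a b => op_smul_add_A' x a b
      map_smul' := fun z a => op_smul_csmul_A' x z a } ‖x‖
    (fun a => norm_op_smul_le' x a)

@[simp] lemma smulCLM_apply (x : E) (a : A) : smulCLM (E := E) x a = x <• a := rfl

/-- the rank-one operator θ_{η,ξ} -/
noncomputable def theta (η ξ : E) : E →L[ℂ] E :=
  (smulCLM η).comp (CStarModuleRight.innerSL (A := A) ξ)

@[simp] lemma theta_apply (η ξ x : E) : theta (A := A) η ξ x = η <• ⟪ξ, x⟫_A := rfl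

lemma theta_mem_KE (η ξ : E) : theta (A := A) η ξ ∈ KE A E :=
  NonUnitalSubalgebra.le_topologicalClosure _
    (NonUnitalAlgebra.subset_adjoin ℂ ⟨η, ξ, fun _ => rfl⟩)

/-- the set of `A`-module maps is a closed set -/
lemma isClosed_moduleMaps :
    IsClosed {T : E →L[ℂ] E | ∀ (x : E) (a : A), T (x <• a) = T x <• a} := by
  have : {T : E →L[ℂ] E | ∀ (x : E) (a : A), T (x <• a) = T x <• a} =
      ⋂ (x : E), ⋂ (a : A), {T : E →L[ℂ] E | T (x <• a) = T x <• a} := by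
    ext T; simp [Set.mem_iInter]
  rw [this]
  refine isClosed_iInter fun x => isClosed_iInter fun a => isClosed_eq ?_ ?_
  · exact (ContinuousLinearMap.apply ℂ E (x <• a)).continuous
  · exact (rmulCLM a).continuous.comp (ContinuousLinearMap.apply ℂ E x).continuous

/-- every element of `K(E)` is an `A`-module map -/
lemma KE_moduleMap {K : E →L[ℂ] E} (hK : K ∈ KE A E) (x : E) (a : A) :
    K (x <• a) = K x <• a := by
  set P : Set (E →L[ℂ] E) := {T | ∀ (x : E) (a : A), T (x <• a) = T x <• a} with hP
  have hsub : (NonUnitalAlgebra.adjoin ℂ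
      {T : E →L[ℂ] E | ∃ η ξ : E, ∀ x : E, T x = η <• ⟪ξ, x⟫_A} : Set (E →L[ℂ] E)) ⊆ P := by
    intro T hT
    induction hT using NonUnitalAlgebra.adjoin_induction with
    | mem T hT =>
      obtain ⟨η, ξ, hT⟩ := hT
      intro x a
      rw [hT, hT, CStarModuleRight.inner_op_smul_right, ← op_smul_smul']
    | add T U _ _ hT hU => intro x a
                           simp only [ContinuousLinearMap.add_apply, hT x a, hU x a, op_smul_add']
    | zero => intro x a
              simp only [ContinuousLinearMap.zero_apply, op_smul_zero']
    | mul T U _ _ hT hU => intro x a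
                           simp only [ContinuousLinearMap.mul_apply, hU x a, hT (U x) a]
    | smul z T _ hT => intro x a
                       simp only [ContinuousLinearMap.smul_apply, hT x a, op_smul_csmul']
  have : (KE A E : Set (E →L[ℂ] E)) ⊆ P :=
    closure_minimal hsub isClosed_moduleMaps
  exact this hK x a

lemma real_bound' {t e : ℝ} (ht : 0 ≤ t) (he : 0 < e) :
    t * (1 - t^2/(t^2+e))^2 ≤ Real.sqrt e := by
  set s := Real.sqrt e with hs
  have hs0 : 0 < s := Real.sqrt_pos.mpr he
  have hse : s^2 = e := Real.sq_sqrt he.le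
  have hd : 0 < t^2 + e := by positivity
  have h1 : 1 - t^2/(t^2+e) = e/(t^2+e) := by field_simp; ring
  rw [h1, div_pow, mul_div_assoc', div_le_iff₀ (by positivity)]
  rw [← hse]
  nlinarith [sq_nonneg (t - s), sq_nonneg (t*s - s^2), sq_nonneg (t^2 - s^2),
    mul_nonneg (sq_nonneg s) (sq_nonneg (2*t - s)), mul_nonneg ht hs0.le,
    mul_nonneg (mul_nonneg ht ht) hs0.le]

lemma cfc_bound' (a : A) (ha : 0 ≤ a) (e : ℝ) (he : 0 < e) (c : A)
    (hc : c = cfcₙ (fun t : ℝ => t^2 / (t^2 + e)) a) :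
    ‖a - a * c - (c * a - c * (a * c))‖ ≤ Real.sqrt e := by
  have hsa : IsSelfAdjoint a := .of_nonneg ha
  set g : ℝ → ℝ := fun t => t^2 / (t^2 + e) with hg
  have hgc : Continuous g := (continuous_pow 2).div (by continuity) fun t => by positivity
  have hg0 : g 0 = 0 := by simp [hg]
  have hid : Continuous (fun t : ℝ => t) := continuous_id
  have h1 : cfcₙ (fun t : ℝ => t * g t) a = a * c := by
    rw [cfcₙ_mul _ _ a hid.continuousOn rfl hgc.continuousOn hg0, cfcₙ_id' ℝ a, hc]
  have h2 : cfcₙ (fun t : ℝ => g t * t) a = c * a := by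
    rw [cfcₙ_mul _ _ a hgc.continuousOn hg0 hid.continuousOn rfl, cfcₙ_id' ℝ a, hc]
  have h3 : cfcₙ (fun t : ℝ => g t * (t * g t)) a = c * (a * c) := by
    rw [cfcₙ_mul g (fun t => t * g t) a hgc.continuousOn hg0 (hid.mul hgc).continuousOn (by simp [hg]), h1, hc]
  have key : cfcₙ (fun t : ℝ => t * (1 - g t)^2) a = a - a * c - (c * a - c * (a * c)) := by
    have e1 : cfcₙ (fun t : ℝ => t * (1 - g t)^2) a
        = cfcₙ (fun t : ℝ => (t - t * g t) - (g t * t - g t * (t * g t))) a :=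
      cfcₙ_congr fun t _ => by ring
    rw [e1, cfcₙ_sub (fun t => t - t * g t) (fun t => g t * t - g t * (t * g t)) a (hid.sub (hid.mul hgc)).continuousOn (by ring)
        ((hgc.mul hid).sub (hgc.mul (hid.mul hgc))).continuousOn (by ring),
      cfcₙ_sub (fun t => t) (fun t => t * g t) a hid.continuousOn rfl (hid.mul hgc).continuousOn (by ring),
      cfcₙ_sub (fun t => g t * t) (fun t => g t * (t * g t)) a (hgc.mul hid).continuousOn (by ring) (hgc.mul (hid.mul hgc)).continuousOn (by ring),
      cfcₙ_id' ℝ a, h1, h2, h3]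
  rw [← key]
  refine norm_cfcₙ_le fun t ht => ?_
  have ht0 : 0 ≤ t := quasispectrum_nonneg_of_nonneg a ha t ht
  rw [Real.norm_eq_abs, abs_of_nonneg (by positivity)]
  exact real_bound' ht0 he

lemma approx (ξ : E) :
    Filter.Tendsto
      (fun n : ℕ => ξ <• (⟪ξ, ξ⟫_A * cfcₙ (fun t : ℝ => t / (t ^ 2 + 1 / (n + 1))) ⟪ξ, ξ⟫_A))
      Filter.atTop (𝓝 ξ) := by
  set a := ⟪ξ, ξ⟫_A with ha_def
  have ha : 0 ≤ a := CStarModuleRight.inner_self_nonneg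
  have hsa : IsSelfAdjoint a := .of_nonneg ha
  have key : ∀ n : ℕ, ‖ξ - ξ <• (a * cfcₙ (fun t : ℝ => t / (t^2 + 1/(n+1))) a)‖
      ≤ Real.sqrt (Real.sqrt (1/(n+1))) := by
    intro n
    set e : ℝ := 1/(n+1) with he_def
    have he : 0 < e := by positivity
    set g : ℝ → ℝ := fun t => t^2 / (t^2 + e) with hgdef
    have hgc : Continuous g := (continuous_pow 2).div (by continuity) fun t => by positivity
    have hfc : Continuous fun t : ℝ => t / (t^2 + e) :=
      continuous_id.div (by continuity) fun t => by positivity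
    have hid : Continuous (fun t : ℝ => t) := continuous_id
    have hc' : a * cfcₙ (fun t : ℝ => t / (t^2+e)) a = cfcₙ g a := by
      have h := cfcₙ_mul (fun t : ℝ => t) (fun t : ℝ => t/(t^2+e)) a
        hid.continuousOn rfl hfc.continuousOn (by simp)
      rw [cfcₙ_id' ℝ a] at h
      rw [← h]
      exact cfcₙ_congr fun t _ => by rw [hgdef]; ring
    set c := cfcₙ g a with hc_def
    have hcsa : IsSelfAdjoint c := hc_def ▸ cfcₙ_predicate g a
    have hinner : ⟪ξ - ξ <• c, ξ - ξ <• c⟫_A = a - a*c - (c*a - c*(a*c)) := by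
      rw [CStarModuleRight.inner_sub_right, CStarModuleRight.inner_sub_left, CStarModuleRight.inner_sub_left,
        CStarModuleRight.inner_op_smul_right, CStarModuleRight.inner_op_smul_left,
        CStarModuleRight.inner_op_smul_left, CStarModuleRight.inner_op_smul_right, hcsa.star_eq, ← ha_def]
      noncomm_ring
    have hb : ‖a - a*c - (c*a - c*(a*c))‖ ≤ Real.sqrt e :=
      cfc_bound' a ha e he c (by rw [hc_def, hgdef])
    rw [hc']
    rw [CStarModuleRight.norm_eq_sqrt_norm_inner_self (A := A), hinner]
    calc Real.sqrt ‖a - a*c - (c*a - c*(a*c))‖ ≤ Real.sqrt (Real.sqrt e) :=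
      Real.sqrt_le_sqrt hb
    _ = Real.sqrt (Real.sqrt (1/(n+1))) := by rw [he_def]
  rw [tendsto_iff_norm_sub_tendsto_zero]
  refine squeeze_zero (g := fun n : ℕ => Real.sqrt (Real.sqrt (1/(n+1))))
    (fun n => norm_nonneg _) (fun n => by rw [norm_sub_rev]; exact key n) ?_
  have h0 : Tendsto (fun n : ℕ => 1/((n:ℝ)+1)) atTop (𝓝 0) :=
    tendsto_one_div_add_atTop_nhds_zero_nat
  have h1 : Tendsto Real.sqrt (𝓝 0) (𝓝 0) := by
    simpa using Real.continuous_sqrt.tendsto 0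
  exact h1.comp (h1.comp h0)

end LMaux


open LMaux CStarModuleRight

/-- A bounded operator `S` on `E` is a left multiplier of `K(E)` (i.e. `S ∘ K ∈ K(E)` for all
`K ∈ K(E)`) if and only if `S` is an `A`-module map; hence `LM_E(K(E)) = End_A(E)`. -/
theorem LM_KE_eq_End :
    {S : E →L[ℂ] E | ∀ K ∈ KE A E, S ∘L K ∈ KE A E} =
      {S : E →L[ℂ] E | ∀ (ξ : E) (a : A), S (ξ <• a) = S ξ <• a} := by
  ext S
  simp only [Set.mem_setOf_eq]
  constructor
  · -- left multiplier implies module map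
    intro hS ξ a
    set K := theta (A := A) ξ ξ with hKdef
    have hK : K ∈ KE A E := theta_mem_KE ξ ξ
    have hSK : S ∘L K ∈ KE A E := hS K hK
    -- the approximating sequence
    set y : ℕ → E := fun n =>
      K (ξ <• cfcₙ (fun t : ℝ => t / (t ^ 2 + 1 / (n + 1))) ⟪ξ, ξ⟫_A) with hy_def
    have hy : Tendsto y atTop (𝓝 ξ) := by
      have : y = fun n : ℕ =>
          ξ <• (⟪ξ, ξ⟫_A * cfcₙ (fun t : ℝ => t / (t ^ 2 + 1 / (n + 1))) ⟪ξ, ξ⟫_A) := by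
        funext n
        rw [hy_def]
        simp only [hKdef, theta_apply, CStarModuleRight.inner_op_smul_right]
      rw [this]
      exact approx ξ
    -- termwise identity
    have heq : ∀ n : ℕ, S (y n <• a) = S (y n) <• a := by
      intro n
      set x := ξ <• cfcₙ (fun t : ℝ => t / (t ^ 2 + 1 / (n + 1))) ⟪ξ, ξ⟫_A with hx_def
      have h1 : y n <• a = K (x <• a) := by rw [hy_def, KE_moduleMap hK]
      have h2 : S (K (x <• a)) = (S ∘L K) (x <• a) := rfl
      rw [h1, h2, KE_moduleMap hSK]
      rfl
    have hL1 : Tendsto (fun n => S (y n <• a)) atTop (𝓝 (S (ξ <• a))) := by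
      have : Tendsto (fun n => y n <• a) atTop (𝓝 (ξ <• a)) := by
        have := ((rmulCLM (E := E) a).continuous.tendsto ξ).comp hy
        simpa [Function.comp_def] using this
      exact (S.continuous.tendsto _).comp this
    have hL2 : Tendsto (fun n => S (y n) <• a) atTop (𝓝 (S ξ <• a)) := by
      have h3 : Tendsto (fun n => S (y n)) atTop (𝓝 (S ξ)) := (S.continuous.tendsto _).comp hy
      have := ((rmulCLM (E := E) a).continuous.tendsto (S ξ)).comp h3
      simpa [Function.comp_def] using this
    have : Tendsto (fun n => S (y n <• a)) atTop (𝓝 (S ξ <• a)) := by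
      rw [show (fun n => S (y n <• a)) = fun n => S (y n) <• a from funext heq]
      exact hL2
    exact tendsto_nhds_unique hL1 this
  · -- module map implies left multiplier
    intro hS K hK
    set gens : Set (E →L[ℂ] E) := {T : E →L[ℂ] E | ∃ η ξ : E, ∀ x : E, T x = η <• ⟪ξ, x⟫_A}
      with hgens
    have hclosed : IsClosed ((fun K : E →L[ℂ] E => S ∘L K) ⁻¹' (KE A E : Set (E →L[ℂ] E))) := by
      refine IsClosed.preimage ?_ (NonUnitalSubalgebra.isClosed_topologicalClosure _)
      exact ((ContinuousLinearMap.compL ℂ E E E) S).continuous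
    have hsub : (NonUnitalAlgebra.adjoin ℂ gens : Set (E →L[ℂ] E)) ⊆
        (fun K : E →L[ℂ] E => S ∘L K) ⁻¹' (KE A E : Set (E →L[ℂ] E)) := by
      intro T hT
      induction hT using NonUnitalAlgebra.adjoin_induction with
      | mem T hT =>
        obtain ⟨η, ξ, hT⟩ := hT
        refine NonUnitalSubalgebra.le_topologicalClosure _ (NonUnitalAlgebra.subset_adjoin ℂ ?_)
        exact ⟨S η, ξ, fun x => by rw [ContinuousLinearMap.comp_apply, hT x, hS]⟩
      | add T U _ _ hT hU =>
        simp only [Set.mem_preimage, SetLike.mem_coe] at hT hU ⊢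
        have h : S ∘L (T + U) = S ∘L T + S ∘L U := by ext x; simp
        rw [h]; exact add_mem hT hU
      | zero =>
        simp only [Set.mem_preimage, SetLike.mem_coe]
        have h : S ∘L (0 : E →L[ℂ] E) = 0 := by ext x; simp
        rw [h]; exact zero_mem _
      | mul T U hTm hUm hT hU =>
        simp only [Set.mem_preimage, SetLike.mem_coe] at hT hU ⊢
        have h1 : S ∘L (T * U) = (S ∘L T) * U := by ext x; rfl
        have h2 : U ∈ KE A E := NonUnitalSubalgebra.le_topologicalClosure _ hUm
        rw [h1]; exact mul_mem hT h2
      | smul z T _ hT =>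
        simp only [Set.mem_preimage, SetLike.mem_coe] at hT ⊢
        have h : S ∘L (z • T) = z • (S ∘L T) := by ext x; simp
        rw [h]; exact SMulMemClass.smul_mem z hT
    exact closure_minimal hsub hclosed hK
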